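/- For every α > 0 there is a constant c > 0 depending only on α such that for all d ≥ 3, all σ > 0, and all integers s with 1 ≤ s ≤ ⌊√(d log d/2)⌋ + 1: sup_{θ ∈ Θ_s} E_θ[(L̂_s(y) − L(θ))⁴] ≤ c σ⁴ d⁴ (log d)². -/

import Mathlib

open MeasureTheory ProbabilityTheory

/-- Law of `y = θ + σ·ξ` with `ξ` i.i.d. standard normal: the product of Gaussians `N(θ j, σ²)`. -/
noncomputable def gaussMeasure (d : ℕ) (θ : Fin d → ℝ) (σ : ℝ) : Measure (Fin d → ℝ) :=
  Measure.pi fun j => gaussianReal (θ j) (Real.toNNReal (σ ^ 2))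

/-- The sparsity class `Θ_s`: vectors with at most `s` nonzero coordinates. -/
def Theta (d s : ℕ) : Set (Fin d → ℝ) := {θ | {j | θ j ≠ 0}.ncard ≤ s}

/-- The linear functional `L(θ) = ∑ θ_j`. -/
noncomputable def Lfun (d : ℕ) (θ : Fin d → ℝ) : ℝ := ∑ j, θ j

/-- The rate `Φ^L(σ, s) = σ² s² log(1 + d (log d) / s²)`. -/
noncomputable def PhiL (d : ℕ) (σ : ℝ) (s : ℕ) : ℝ :=
  σ ^ 2 * (s : ℝ) ^ 2 * Real.log (1 + (d : ℝ) * Real.log d / (s : ℝ) ^ 2)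

/-- The non-adaptive estimators `L̂_s` (known `σ`). -/
noncomputable def LhatS (d : ℕ) (α σ : ℝ) (s : ℕ) (y : Fin d → ℝ) : ℝ :=
  if (s : ℝ) ≤ Real.sqrt ((d : ℝ) * Real.log d / 2) then
    ∑ j, if α * σ ^ 2 * Real.log (1 + (d : ℝ) * Real.log d / (s : ℝ) ^ 2) < (y j) ^ 2
      then y j else 0
  else ∑ j, y j


open Real
lemma sq_le_four_exp {t : ℝ} (ht : 0 ≤ t) : t ^ 2 ≤ 4 * Real.exp t := by
  have h := Real.add_one_le_exp (t / 2)
  have he : Real.exp t = Real.exp (t / 2) * Real.exp (t / 2) := by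
    rw [← Real.exp_add]; ring_nf
  nlinarith [Real.exp_pos (t / 2)]

lemma gauss_fourth_bound (θ σ : ℝ) (hσ : 0 < σ) :
    ∫⁻ x, ENNReal.ofReal ((x - θ) ^ 4) ∂(gaussianReal θ (Real.toNNReal (σ ^ 2)))
      ≤ ENNReal.ofReal (128 * σ ^ 4) := by
  set v : NNReal := Real.toNNReal (σ ^ 2) with hvdef
  have hv : (v : ℝ) = σ ^ 2 := Real.coe_toNNReal _ (sq_nonneg σ)
  have hv0 : v ≠ 0 := by
    simp only [hvdef, ne_eq, Real.toNNReal_eq_zero, not_le]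
    positivity
  have hmap : gaussianReal θ v = (gaussianReal 0 v).map (· + θ) := by
    rw [gaussianReal_map_add_const]; simp
  rw [hmap, lintegral_map (by fun_prop) (measurable_add_const θ)]
  simp only [add_sub_cancel_right]
  rw [gaussianReal_of_var_ne_zero 0 hv0,
    lintegral_withDensity_eq_lintegral_mul _ (measurable_gaussianPDF 0 v) (by fun_prop)]
  set b : ℝ := (4 * σ ^ 2)⁻¹ with hbdef
  have hb : 0 < b := by positivity
  set K : ℝ := 64 * σ ^ 4 * (Real.sqrt (2 * π * σ ^ 2))⁻¹ with hKdef
  have hsqrt_pos : 0 < Real.sqrt (2 * π * σ ^ 2) := by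
    apply Real.sqrt_pos.mpr; positivity
  have hK0 : 0 ≤ K := by positivity
  have hpt : ∀ x : ℝ, (gaussianPDF 0 v * fun x => ENNReal.ofReal (x ^ 4)) x
      ≤ ENNReal.ofReal (K * Real.exp (-b * x ^ 2)) := by
    intro x
    simp only [Pi.mul_apply, gaussianPDF]
    rw [← ENNReal.ofReal_mul (gaussianPDFReal_nonneg 0 v x)]
    apply ENNReal.ofReal_le_ofReal
    unfold gaussianPDFReal
    rw [hv]
    have ht := sq_le_four_exp (t := x ^ 2 / (4 * σ ^ 2)) (by positivity)
    have hx4 : x ^ 4 ≤ 64 * σ ^ 4 * Real.exp (x ^ 2 / (4 * σ ^ 2)) := by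
      have h2 : (x ^ 2 / (4 * σ ^ 2)) ^ 2 = x ^ 4 / (16 * σ ^ 4) := by
        field_simp; ring
      rw [h2] at ht
      rw [div_le_iff₀ (by positivity)] at ht
      nlinarith
    have hexp : Real.exp (x ^ 2 / (4 * σ ^ 2)) * Real.exp (- (x - 0) ^ 2 / (2 * σ ^ 2))
        = Real.exp (-b * x ^ 2) := by
      rw [← Real.exp_add, hbdef]
      congr 1
      field_simp
      ring
    calc (Real.sqrt (2 * π * σ ^ 2))⁻¹ * Real.exp (- (x - 0) ^ 2 / (2 * σ ^ 2)) * x ^ 4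
        ≤ (Real.sqrt (2 * π * σ ^ 2))⁻¹ * Real.exp (- (x - 0) ^ 2 / (2 * σ ^ 2))
          * (64 * σ ^ 4 * Real.exp (x ^ 2 / (4 * σ ^ 2))) := by
          apply mul_le_mul_of_nonneg_left hx4
          positivity
      _ = K * (Real.exp (x ^ 2 / (4 * σ ^ 2)) * Real.exp (- (x - 0) ^ 2 / (2 * σ ^ 2))) := by
          rw [hKdef]; ring
      _ = K * Real.exp (-b * x ^ 2) := by rw [hexp]
  calc ∫⁻ x, (gaussianPDF 0 v * fun x => ENNReal.ofReal (x ^ 4)) x ∂volume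
      ≤ ∫⁻ x, ENNReal.ofReal (K * Real.exp (-b * x ^ 2)) ∂volume := lintegral_mono hpt
    _ = ENNReal.ofReal (∫ x, K * Real.exp (-b * x ^ 2)) := by
        rw [← ofReal_integral_eq_lintegral_ofReal
          ((integrable_exp_neg_mul_sq hb).const_mul K)
          (Filter.Eventually.of_forall fun x => by positivity)]
    _ ≤ ENNReal.ofReal (128 * σ ^ 4) := by
        apply ENNReal.ofReal_le_ofReal
        rw [integral_const_mul, integral_gaussian]
        have h1 : Real.sqrt (π / b) ≤ 2 * Real.sqrt (2 * π * σ ^ 2) := by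
          have hπb : π / b = 4 * π * σ ^ 2 := by rw [hbdef]; field_simp
          rw [hπb]
          have h2 : (4 : ℝ) * π * σ ^ 2 ≤ (2 * Real.sqrt (2 * π * σ ^ 2)) ^ 2 := by
            rw [mul_pow, Real.sq_sqrt (by positivity)]
            nlinarith [Real.pi_pos, sq_nonneg σ]
          calc Real.sqrt (4 * π * σ ^ 2) ≤ Real.sqrt ((2 * Real.sqrt (2 * π * σ ^ 2)) ^ 2) :=
Real.sqrt_le_sqrt h2
            _ = 2 * Real.sqrt (2 * π * σ ^ 2) := Real.sqrt_sq (by positivity)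
        calc K * Real.sqrt (π / b) ≤ K * (2 * Real.sqrt (2 * π * σ ^ 2)) := by
              apply mul_le_mul_of_nonneg_left h1 hK0
          _ = 128 * σ ^ 4 * ((Real.sqrt (2 * π * σ ^ 2))⁻¹ * Real.sqrt (2 * π * σ ^ 2)) := by
              rw [hKdef]; ring
          _ = 128 * σ ^ 4 := by rw [inv_mul_cancel₀ (ne_of_gt hsqrt_pos), mul_one]

lemma pi_map_eval {d : ℕ} (μ : Fin d → Measure ℝ) [∀ i, IsProbabilityMeasure (μ i)] (i : Fin d) :
    (Measure.pi μ).map (fun y => y i) = μ i := by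
  ext s hs
  rw [Measure.map_apply (measurable_pi_apply i) hs]
  have h : (fun y : Fin d → ℝ => y i) ⁻¹' s
      = Set.pi Set.univ (Function.update (fun _ => Set.univ) i s) := by
    ext y
    simp only [Set.mem_preimage, Set.mem_pi, Set.mem_univ, true_implies,
      Function.update_apply]
    constructor
    · intro hy j
      by_cases hj : j = i
      · subst hj; simp [hy]
      · simp [hj]
    · intro hy
      have := hy i
      simpa using this
  rw [h, Measure.pi_pi]
  rw [Finset.prod_eq_single i]
  · simp
  · intro j _ hj
    simp [Function.update_apply, hj]
  · simp

lemma coord_bound (θj σ T : ℝ) (hσ : 0 < σ) (hT : 0 ≤ T) (f : ℝ → ℝ)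
    (hfx : ∀ x, |f x - x| ≤ Real.sqrt T) :
    ∫⁻ x, ENNReal.ofReal ((f x - θj) ^ 4) ∂(gaussianReal θj (Real.toNNReal (σ ^ 2)))
      ≤ ENNReal.ofReal (1024 * σ ^ 4 + 8 * T ^ 2) := by
  have hpt : ∀ x : ℝ, (f x - θj) ^ 4 ≤ 8 * (x - θj) ^ 4 + 8 * T ^ 2 := by
    intro x
    have h1 : |f x - θj| ≤ |x - θj| + Real.sqrt T := by
      calc |f x - θj| = |(f x - x) + (x - θj)| := by ring_nf
        _ ≤ |f x - x| + |x - θj| := abs_add_le _ _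
        _ ≤ Real.sqrt T + |x - θj| := by linarith [hfx x]
        _ = |x - θj| + Real.sqrt T := by ring
    set a := f x - θj
    set u := |x - θj|
    set w := Real.sqrt T
    have hu : 0 ≤ u := abs_nonneg _
    have hw : 0 ≤ w := Real.sqrt_nonneg _
    have hw2 : w ^ 2 = T := Real.sq_sqrt hT
    have ha4 : a ^ 4 = |a| ^ 4 := (Even.pow_abs (by decide) a).symm
    have hu4 : (x - θj) ^ 4 = u ^ 4 := (Even.pow_abs (by decide) _).symm
    have h2 : |a| ^ 4 ≤ (u + w) ^ 4 :=
      pow_le_pow_left₀ (abs_nonneg a) h1 4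
    have h3 : (u + w) ^ 4 ≤ 8 * u ^ 4 + 8 * w ^ 4 := by
      nlinarith [sq_nonneg (u - w), sq_nonneg (u + w), sq_nonneg (u ^ 2 - w ^ 2),
        mul_nonneg hu hw, mul_nonneg (mul_nonneg hu hu) hw, mul_nonneg (mul_nonneg hw hw) hu]
    have hw4 : w ^ 4 = T ^ 2 := by rw [show w ^ 4 = (w ^ 2) ^ 2 by ring, hw2]
    rw [ha4, hu4]
    linarith
  calc ∫⁻ x, ENNReal.ofReal ((f x - θj) ^ 4) ∂(gaussianReal θj (Real.toNNReal (σ ^ 2)))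
      ≤ ∫⁻ x, (ENNReal.ofReal 8 * ENNReal.ofReal ((x - θj) ^ 4)
          + ENNReal.ofReal (8 * T ^ 2)) ∂(gaussianReal θj (Real.toNNReal (σ ^ 2))) := by
        apply lintegral_mono
        intro x
        calc ENNReal.ofReal ((f x - θj) ^ 4)
            ≤ ENNReal.ofReal (8 * (x - θj) ^ 4 + 8 * T ^ 2) :=
              ENNReal.ofReal_le_ofReal (hpt x)
          _ ≤ ENNReal.ofReal (8 * (x - θj) ^ 4) + ENNReal.ofReal (8 * T ^ 2) :=
              ENNReal.ofReal_add_le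
          _ = ENNReal.ofReal 8 * ENNReal.ofReal ((x - θj) ^ 4)
              + ENNReal.ofReal (8 * T ^ 2) := by
              rw [← ENNReal.ofReal_mul (by norm_num)]
    _ ≤ ENNReal.ofReal (1024 * σ ^ 4 + 8 * T ^ 2) := by
        rw [lintegral_add_right _ measurable_const, lintegral_const_mul _ (by fun_prop),
          lintegral_const]
        simp only [measure_univ, mul_one]
        calc ENNReal.ofReal 8 * (∫⁻ x, ENNReal.ofReal ((x - θj) ^ 4)
              ∂(gaussianReal θj (Real.toNNReal (σ ^ 2)))) + ENNReal.ofReal (8 * T ^ 2)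
            ≤ ENNReal.ofReal 8 * ENNReal.ofReal (128 * σ ^ 4) + ENNReal.ofReal (8 * T ^ 2) := by
              gcongr
              exact gauss_fourth_bound θj σ hσ
          _ = ENNReal.ofReal (1024 * σ ^ 4 + 8 * T ^ 2) := by
              rw [← ENNReal.ofReal_mul (by norm_num), ← ENNReal.ofReal_add (by positivity)
                (by positivity)]
              ring_nf

lemma main_core (d : ℕ) (σ T : ℝ) (θ : Fin d → ℝ) (hσ : 0 < σ) (hT : 0 ≤ T)
    (f : ℝ → ℝ) (hf : Measurable f) (hfx : ∀ x, |f x - x| ≤ Real.sqrt T) :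
    ∫⁻ y, ENNReal.ofReal ((∑ j, f (y j) - ∑ j, θ j) ^ 4) ∂(gaussMeasure d θ σ)
      ≤ ENNReal.ofReal ((d : ℝ) ^ 4 * (1024 * σ ^ 4 + 8 * T ^ 2)) := by
  set μ : Fin d → Measure ℝ := fun j => gaussianReal (θ j) (Real.toNNReal (σ ^ 2)) with hμ
  have hB0 : (0:ℝ) ≤ 1024 * σ ^ 4 + 8 * T ^ 2 := by positivity
  -- pointwise power mean inequality
  have hpt : ∀ y : Fin d → ℝ, (∑ j, f (y j) - ∑ j, θ j) ^ 4
      ≤ ∑ j, (d : ℝ) ^ 3 * (f (y j) - θ j) ^ 4 := by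
    intro y
    have hsub : ∑ j, f (y j) - ∑ j, θ j = ∑ j, (f (y j) - θ j) :=
      (Finset.sum_sub_distrib _ _).symm
    rw [hsub]
    have h1 : (∑ j, (f (y j) - θ j)) ^ 4 ≤ (∑ j, |f (y j) - θ j|) ^ 4 := by
      rw [← Even.pow_abs (by decide) (∑ j, (f (y j) - θ j))]
      exact pow_le_pow_left₀ (abs_nonneg _) (Finset.abs_sum_le_sum_abs _ _) 4
    have h2 : (∑ j, |f (y j) - θ j|) ^ 4
        ≤ (Finset.univ.card : ℝ) ^ 3 * ∑ j, |f (y j) - θ j| ^ 4 :=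
      pow_sum_le_card_mul_sum_pow (fun i _ => abs_nonneg _) 3
    have h3 : ∑ j, |f (y j) - θ j| ^ 4 = ∑ j, (f (y j) - θ j) ^ 4 := by
      refine Finset.sum_congr rfl fun j _ => Even.pow_abs (by decide) _
    rw [Finset.card_univ, Fintype.card_fin] at h2
    rw [Finset.mul_sum] at h2
    calc (∑ j, (f (y j) - θ j)) ^ 4 ≤ (∑ j, |f (y j) - θ j|) ^ 4 := h1
      _ ≤ ∑ j, (d : ℝ) ^ 3 * |f (y j) - θ j| ^ 4 := h2
      _ = ∑ j, (d : ℝ) ^ 3 * (f (y j) - θ j) ^ 4 :=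
          Finset.sum_congr rfl fun j _ => by rw [Even.pow_abs (by decide)]
  have hmeas : ∀ j : Fin d, Measurable fun y : Fin d → ℝ =>
      ENNReal.ofReal ((d : ℝ) ^ 3 * (f (y j) - θ j) ^ 4) := by
    intro j
    apply Measurable.ennreal_ofReal
    exact (((hf.comp (measurable_pi_apply j)).sub measurable_const).pow_const 4).const_mul _
  calc ∫⁻ y, ENNReal.ofReal ((∑ j, f (y j) - ∑ j, θ j) ^ 4) ∂(gaussMeasure d θ σ)
      ≤ ∫⁻ y, ∑ j, ENNReal.ofReal ((d : ℝ) ^ 3 * (f (y j) - θ j) ^ 4) ∂(gaussMeasure d θ σ) := by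
        apply lintegral_mono
        intro y
        calc ENNReal.ofReal ((∑ j, f (y j) - ∑ j, θ j) ^ 4)
            ≤ ENNReal.ofReal (∑ j, (d : ℝ) ^ 3 * (f (y j) - θ j) ^ 4) :=
              ENNReal.ofReal_le_ofReal (hpt y)
          _ = ∑ j, ENNReal.ofReal ((d : ℝ) ^ 3 * (f (y j) - θ j) ^ 4) :=
              ENNReal.ofReal_sum_of_nonneg (fun j _ => by positivity)
    _ = ∑ j, ∫⁻ y, ENNReal.ofReal ((d : ℝ) ^ 3 * (f (y j) - θ j) ^ 4) ∂(gaussMeasure d θ σ) :=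
        lintegral_finset_sum _ (fun j _ => hmeas j)
    _ ≤ ∑ j : Fin d, ENNReal.ofReal ((d : ℝ) ^ 3 * (1024 * σ ^ 4 + 8 * T ^ 2)) := by
        apply Finset.sum_le_sum
        intro j _
        have hrw : ∫⁻ y, ENNReal.ofReal ((d : ℝ) ^ 3 * (f (y j) - θ j) ^ 4) ∂(gaussMeasure d θ σ)
            = ∫⁻ x, ENNReal.ofReal ((d : ℝ) ^ 3 * (f x - θ j) ^ 4) ∂(μ j) := by
          rw [← pi_map_eval μ j, lintegral_map (by
            apply Measurable.ennreal_ofReal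
            exact ((hf.sub measurable_const).pow_const 4).const_mul _) (measurable_pi_apply j)]
          rfl
        rw [hrw]
        have : ∀ x : ℝ, ENNReal.ofReal ((d : ℝ) ^ 3 * (f x - θ j) ^ 4)
            = ENNReal.ofReal ((d : ℝ) ^ 3) * ENNReal.ofReal ((f x - θ j) ^ 4) := by
          intro x; rw [← ENNReal.ofReal_mul (by positivity)]
        simp_rw [this]
        rw [lintegral_const_mul _ (by
          apply Measurable.ennreal_ofReal
          exact (hf.sub measurable_const).pow_const 4)]
        calc ENNReal.ofReal ((d : ℝ) ^ 3) * ∫⁻ x, ENNReal.ofReal ((f x - θ j) ^ 4) ∂(μ j)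
            ≤ ENNReal.ofReal ((d : ℝ) ^ 3) * ENNReal.ofReal (1024 * σ ^ 4 + 8 * T ^ 2) := by
              gcongr
              exact coord_bound (θ j) σ T hσ hT f hfx
          _ = ENNReal.ofReal ((d : ℝ) ^ 3 * (1024 * σ ^ 4 + 8 * T ^ 2)) := by
              rw [← ENNReal.ofReal_mul (by positivity)]
    _ = ENNReal.ofReal ((d : ℝ) ^ 4 * (1024 * σ ^ 4 + 8 * T ^ 2)) := by
        rw [Finset.sum_const, Finset.card_univ, Fintype.card_fin, nsmul_eq_mul,
          ← ENNReal.ofReal_natCast d, ← ENNReal.ofReal_mul (by positivity)]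
        congr 1
        ring

/-- Lemma 1 (first bound): for all `s ≤ ⌊√(d log d / 2)⌋ + 1`,
`E_θ (L̂_s - L)⁴ ≤ c σ⁴ d⁴ (log d)²` uniformly over `Θ_s`. -/
theorem fourth_moment_LhatS :
    ∀ α : ℝ, 0 < α → ∃ c : ℝ, 0 < c ∧
      ∀ d : ℕ, 3 ≤ d → ∀ σ : ℝ, 0 < σ →
        ∀ s : ℕ, 1 ≤ s → s ≤ Nat.floor (Real.sqrt ((d : ℝ) * Real.log d / 2)) + 1 →
          ∀ θ ∈ Theta d s,
            ∫⁻ y, ENNReal.ofReal ((LhatS d α σ s y - Lfun d θ) ^ 4) ∂(gaussMeasure d θ σ)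
              ≤ ENNReal.ofReal (c * σ ^ 4 * (d : ℝ) ^ 4 * (Real.log d) ^ 2) := by
  intro α hα
  refine ⟨1024 + 32 * α ^ 2, by positivity, ?_⟩
  intro d hd σ hσ s hs1 _ θ _
  have hd3 : (3 : ℝ) ≤ (d : ℝ) := by exact_mod_cast hd
  have hd0 : (0 : ℝ) < (d : ℝ) := by linarith
  have hlog1 : 1 ≤ Real.log d := by
    have h3 : Real.exp 1 ≤ 3 := by
      have := Real.exp_one_lt_d9; linarith
    calc (1 : ℝ) = Real.log (Real.exp 1) := (Real.log_exp 1).symm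
      _ ≤ Real.log d := Real.log_le_log (Real.exp_pos 1) (by linarith)
  have hlog0 : 0 ≤ Real.log d := by linarith
  have hs0 : (1 : ℝ) ≤ (s : ℝ) := by exact_mod_cast hs1
  set T : ℝ := α * σ ^ 2 * Real.log (1 + (d : ℝ) * Real.log d / (s : ℝ) ^ 2) with hTdef
  have hfrac : 0 ≤ (d : ℝ) * Real.log d / (s : ℝ) ^ 2 := by positivity
  have hT0 : 0 ≤ T := by
    apply mul_nonneg (by positivity)
    exact Real.log_nonneg (by linarith)
  have hT2 : T ≤ 2 * α * σ ^ 2 * Real.log d := by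
    have hs2 : (1 : ℝ) ≤ (s : ℝ) ^ 2 := one_le_pow₀ hs0
    have h1 : (d : ℝ) * Real.log d / (s : ℝ) ^ 2 ≤ (d : ℝ) * Real.log d :=
      div_le_self (by positivity) hs2
    have h2 : Real.log d ≤ (d : ℝ) - 1 := Real.log_le_sub_one_of_pos hd0
    have harg : 1 + (d : ℝ) * Real.log d / (s : ℝ) ^ 2 ≤ (d : ℝ) ^ 2 := by
      nlinarith [h1, h2, hd3, hlog0]
    have hlog : Real.log (1 + (d : ℝ) * Real.log d / (s : ℝ) ^ 2) ≤ Real.log ((d : ℝ) ^ 2) :=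
      Real.log_le_log (by linarith) harg
    rw [Real.log_pow] at hlog
    push_cast at hlog
    calc T ≤ α * σ ^ 2 * (2 * Real.log d) :=
        mul_le_mul_of_nonneg_left hlog (by positivity)
      _ = 2 * α * σ ^ 2 * Real.log d := by ring
  have hfinal : ((d : ℝ)) ^ 4 * (1024 * σ ^ 4 + 8 * T ^ 2)
      ≤ (1024 + 32 * α ^ 2) * σ ^ 4 * (d : ℝ) ^ 4 * Real.log d ^ 2 := by
    have hTT : T ^ 2 ≤ 4 * α ^ 2 * σ ^ 4 * Real.log d ^ 2 := by nlinarith [hT0, hT2]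
    have hσ4 : (0:ℝ) ≤ σ ^ 4 := by positivity
    have hll : (1 : ℝ) ≤ Real.log d ^ 2 := one_le_pow₀ hlog1
    have hl2 : σ ^ 4 ≤ σ ^ 4 * Real.log d ^ 2 := le_mul_of_one_le_right hσ4 hll
    have hinner : 1024 * σ ^ 4 + 8 * T ^ 2
        ≤ (1024 + 32 * α ^ 2) * σ ^ 4 * Real.log d ^ 2 := by nlinarith [hTT, hl2]
    calc ((d : ℝ)) ^ 4 * (1024 * σ ^ 4 + 8 * T ^ 2)
        ≤ ((d : ℝ)) ^ 4 * ((1024 + 32 * α ^ 2) * σ ^ 4 * Real.log d ^ 2) :=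
          mul_le_mul_of_nonneg_left hinner (by positivity)
      _ = (1024 + 32 * α ^ 2) * σ ^ 4 * (d : ℝ) ^ 4 * Real.log d ^ 2 := by ring
  by_cases hc : (s : ℝ) ≤ Real.sqrt ((d : ℝ) * Real.log d / 2)
  · set f : ℝ → ℝ := fun x => if T < x ^ 2 then x else 0 with hfdef
    have hLhat : ∀ y : Fin d → ℝ, LhatS d α σ s y = ∑ j, f (y j) := by
      intro y; unfold LhatS; rw [if_pos hc]
    have hfm : Measurable f := by
      apply Measurable.ite _ measurable_id measurable_const
      exact measurableSet_lt measurable_const (by fun_prop)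
    have hfx : ∀ x, |f x - x| ≤ Real.sqrt T := by
      intro x
      simp only [hfdef]
      split_ifs with h
      · simp [Real.sqrt_nonneg]
      · push_neg at h
        rw [zero_sub, abs_neg, ← Real.sqrt_sq_eq_abs]
        exact Real.sqrt_le_sqrt h
    calc ∫⁻ y, ENNReal.ofReal ((LhatS d α σ s y - Lfun d θ) ^ 4) ∂(gaussMeasure d θ σ)
        = ∫⁻ y, ENNReal.ofReal ((∑ j, f (y j) - ∑ j, θ j) ^ 4) ∂(gaussMeasure d θ σ) := by
          apply lintegral_congr
          intro y
          rw [hLhat y, Lfun]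
      _ ≤ ENNReal.ofReal ((d : ℝ) ^ 4 * (1024 * σ ^ 4 + 8 * T ^ 2)) :=
          main_core d σ T θ hσ hT0 f hfm hfx
      _ ≤ ENNReal.ofReal ((1024 + 32 * α ^ 2) * σ ^ 4 * (d : ℝ) ^ 4 * Real.log d ^ 2) :=
          ENNReal.ofReal_le_ofReal hfinal
  · have hLhat : ∀ y : Fin d → ℝ, LhatS d α σ s y = ∑ j, (id : ℝ → ℝ) (y j) := by
      intro y; unfold LhatS; rw [if_neg hc]; rfl
    calc ∫⁻ y, ENNReal.ofReal ((LhatS d α σ s y - Lfun d θ) ^ 4) ∂(gaussMeasure d θ σ)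
        = ∫⁻ y, ENNReal.ofReal ((∑ j, (id : ℝ → ℝ) (y j) - ∑ j, θ j) ^ 4)
            ∂(gaussMeasure d θ σ) := by
          apply lintegral_congr
          intro y
          rw [hLhat y, Lfun]
      _ ≤ ENNReal.ofReal ((d : ℝ) ^ 4 * (1024 * σ ^ 4 + 8 * (0:ℝ) ^ 2)) :=
          main_core d σ 0 θ hσ le_rfl id measurable_id (fun x => by simp)
      _ ≤ ENNReal.ofReal ((1024 + 32 * α ^ 2) * σ ^ 4 * (d : ℝ) ^ 4 * Real.log d ^ 2) := by
          apply ENNReal.ofReal_le_ofReal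
          nlinarith [hfinal, hT0, sq_nonneg T, hd0, pow_pos hd0 4, pow_pos hσ 4]
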